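/- Let d ≥ 1, r ≥ 1 and k₁, …, k_r ≥ 1 be integers with k₁ + ⋯ + k_r ≥ d − r. Then for every u ∈ R_∞^{(d−1)}, the element x_{k₁+1,0}·x_{k₂+1,0}⋯x_{k_r+1,0}·u lies in D_∞(R_∞^{(d)}). In particular, for every integer k ≥ d−1 and every u ∈ R_∞^{(d−1)}, x_{k+1,0}·u ∈ D_∞(R_∞^{(d)}); i.e. e_k := x_{k+1,0} annihilates the S-module R_∞^{(d−1)}/D_∞(R_∞^{(d)}). -/

import Mathlib

open MvPolynomial

noncomputable section

/-- The index set `{(n,k) : 2 ≤ n, 0 ≤ k ≤ n}` of the variables `x_{n,k}` of `R_∞`. -/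
abbrev Idx : Type := {p : ℕ × ℕ // 2 ≤ p.1 ∧ p.2 ≤ p.1}

/-- The polynomial ring `R_∞ = ℚ[x_{n,k} : n ≥ 2, 0 ≤ k ≤ n]`. -/
abbrev Rinf : Type := MvPolynomial Idx ℚ

/-- The variable `x_{n,k}` (and `0` for out-of-range indices, which never occur below). -/
def xv (n k : ℕ) : Rinf := if h : 2 ≤ n ∧ k ≤ n then X ⟨(n, k), h⟩ else 0

/-- The derivation `D_∞` with `D_∞(x_{n,k}) = x_{n,k−1}` for `1 ≤ k ≤ n` and
`D_∞(x_{n,0}) = 0`. -/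
def Dinf : Derivation ℚ Rinf Rinf :=
  MvPolynomial.mkDerivation ℚ fun s : Idx =>
    if s.1.2 = 0 then 0 else xv s.1.1 (s.1.2 - 1)

/-- The weight `wt(x_{n,k}) = k`. -/
def wt : Idx → ℕ := fun s => s.1.2

/-- `R_∞^{(d)}`: the `ℚ`-span of the monomials of weight `d`. -/
def W (d : ℕ) : Submodule ℚ Rinf := weightedHomogeneousSubmodule ℚ wt d

def nd : Idx → ℕ := fun s => s.1.1
def T (t : ℕ) : Submodule ℚ Rinf := weightedHomogeneousSubmodule ℚ nd t
def Uop : Derivation ℚ Rinf Rinf :=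
  MvPolynomial.mkDerivation ℚ fun s : Idx =>
    (((s.1.2 + 1) * (s.1.1 - s.1.2) : ℕ) : ℚ) • xv s.1.1 (s.1.2 + 1)
def Hop : Derivation ℚ Rinf Rinf :=
  MvPolynomial.mkDerivation ℚ fun s : Idx =>
    ((s.1.1 : ℚ) - 2 * s.1.2) • X s

lemma xv_eq {n k : ℕ} (hn : 2 ≤ n) (hk : k ≤ n) : xv n k = X ⟨(n, k), hn, hk⟩ := by
  rw [xv, dif_pos]

lemma Dinf_X (s : Idx) :
    Dinf (X s) = if s.1.2 = 0 then 0 else xv s.1.1 (s.1.2 - 1) := by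
  simp [Dinf]

lemma Uop_X (s : Idx) :
    Uop (X s) = (((s.1.2 + 1) * (s.1.1 - s.1.2) : ℕ) : ℚ) • xv s.1.1 (s.1.2 + 1) := by
  simp [Uop]

lemma Hop_X (s : Idx) : Hop (X s) = ((s.1.1 : ℚ) - 2 * s.1.2) • X s := by
  simp [Hop]

lemma bracket_DU : ⁅Dinf, Uop⁆ = Hop := by
  apply MvPolynomial.derivation_ext
  intro i
  obtain ⟨⟨n, k⟩, hn, hk⟩ := i
  simp only at hn hk
  rw [Derivation.commutator_apply, Hop_X, Uop_X, Dinf_X]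
  simp only [map_smul]
  rcases Nat.lt_or_ge k n with h | h
  · -- k < n
    rw [xv_eq hn (by omega : k + 1 ≤ n), Derivation.map_smul, Dinf_X]
    simp only [Nat.add_sub_cancel]
    rw [if_neg (by omega : ¬ (k + 1 = 0))]
    rcases Nat.eq_zero_or_pos k with rfl | hkpos
    · rw [if_pos rfl, map_zero, sub_zero, xv_eq hn (by omega : 0 ≤ n)]
      congr 1
      push_cast [Nat.sub_zero]
      ring
    · rw [if_neg (by omega : ¬ k = 0), xv_eq hn (by omega : k - 1 ≤ n), Uop_X,
        xv_eq hn (by omega : k - 1 + 1 ≤ n)]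
      simp only
      have hk1 : k - 1 + 1 = k := by omega
      simp only [hk1]
      rw [xv_eq hn (by omega : k ≤ n), ← sub_smul]
      congr 1
      push_cast [Nat.cast_sub (by omega : k ≤ n), Nat.cast_sub (by omega : k - 1 ≤ n),
        Nat.cast_sub (by omega : 1 ≤ k)]
      ring
  · -- k = n
    have hkn : k = n := le_antisymm hk h
    subst hkn
    rw [Nat.sub_self, Nat.mul_zero, Nat.cast_zero, zero_smul, map_zero,
      if_neg (by omega : ¬ k = 0), xv_eq hn (by omega : k - 1 ≤ k), Uop_X]
    simp only
    have hk1 : k - 1 + 1 = k := by omega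
    simp only [hk1]
    rw [xv_eq hn (le_refl k), zero_sub, ← neg_smul]
    congr 1
    push_cast [Nat.cast_sub (by omega : k - 1 ≤ k), Nat.cast_sub (by omega : 1 ≤ k)]
    ring

/-! ### generic membership lemma for images of `mkDerivation` -/

lemma der_mem {f : Idx → Rinf} {M : Submodule ℚ Rinf} (p : Rinf)
    (h : ∀ s ∈ p.support, ∀ i ∈ s.support,
      (monomial (s - Finsupp.single i 1) (1:ℚ)) * f i ∈ M) :
    MvPolynomial.mkDerivation ℚ f p ∈ M := by
  rw [p.as_sum, map_sum]
  refine Submodule.sum_mem _ fun s hs => ?_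
  rw [mkDerivation_monomial]
  refine Submodule.smul_mem _ _ ?_
  rw [Finsupp.sum]
  refine Submodule.sum_mem _ fun i hi => ?_
  have e1 : (monomial (s - Finsupp.single i 1) ((s i : ℚ))) • f i
      = (s i : ℚ) • ((monomial (s - Finsupp.single i 1) (1:ℚ)) * f i) := by
    rw [smul_eq_mul, ← smul_mul_assoc, smul_monomial, smul_eq_mul, mul_one]
  rw [e1]
  exact Submodule.smul_mem _ _ (h s hs i hi)

lemma weight_sub_single {s : Idx →₀ ℕ} {i : Idx} (hi : i ∈ s.support) (w : Idx → ℕ) :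
    Finsupp.weight w (s - Finsupp.single i 1) + w i = Finsupp.weight w s := by
  have h1 : Finsupp.single i 1 ≤ s := by
    rw [Finsupp.single_le_iff]
    exact Nat.one_le_iff_ne_zero.mpr (Finsupp.mem_support_iff.mp hi)
  have h2 : (s - Finsupp.single i 1) + Finsupp.single i 1 = s := tsub_add_cancel_of_le h1
  conv_rhs => rw [← h2]
  rw [map_add]
  congr 1
  rw [Finsupp.weight_apply, Finsupp.sum_single_index] <;> simp

lemma mem_W_T_iff {a t : ℕ} {p : Rinf} :
    p ∈ W a ⊓ T t ↔ (IsWeightedHomogeneous wt p a ∧ IsWeightedHomogeneous nd p t) :=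
  Iff.rfl

lemma monomial_mem_W_T (s : Idx →₀ ℕ) (q : ℚ) :
    monomial s q ∈ W (Finsupp.weight wt s) ⊓ T (Finsupp.weight nd s) :=
  ⟨isWeightedHomogeneous_monomial _ _ _ rfl, isWeightedHomogeneous_monomial _ _ _ rfl⟩

lemma X_mem_W_T (i : Idx) : (X i : Rinf) ∈ W (wt i) ⊓ T (nd i) :=
  ⟨isWeightedHomogeneous_X _ _ _, isWeightedHomogeneous_X _ _ _⟩

lemma mul_mem_W_T {a t b u : ℕ} {p q : Rinf} (hp : p ∈ W a ⊓ T t) (hq : q ∈ W b ⊓ T u) :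
    p * q ∈ W (a + b) ⊓ T (t + u) :=
  ⟨hp.1.mul hq.1, hp.2.mul hq.2⟩

/-! ### grading properties of the derivations -/

lemma Dinf_mem {a t : ℕ} {p : Rinf} (hp : p ∈ W a ⊓ T t) : Dinf p ∈ W (a - 1) ⊓ T t := by
  refine der_mem p fun s hs i hi => ?_
  have hwa : Finsupp.weight wt s = a := hp.1 (mem_support_iff.mp hs)
  have hwt : Finsupp.weight nd s = t := hp.2 (mem_support_iff.mp hs)
  obtain ⟨⟨n, k⟩, hn, hk⟩ := i
  simp only at hn hk
  by_cases hk0 : k = 0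
  · subst hk0
    simp only [if_true, reduceIte, mul_zero]
    exact Submodule.zero_mem _
  · simp only [if_neg hk0]
    rw [xv_eq hn (by omega : k - 1 ≤ n)]
    have h1 := weight_sub_single hi wt
    have h2 := weight_sub_single hi nd
    have hm := mul_mem_W_T
      (monomial_mem_W_T (s - Finsupp.single ⟨(n,k),hn,hk⟩ 1) (1:ℚ))
      (X_mem_W_T ⟨(n, k-1), hn, by omega⟩)
    have ek : Finsupp.weight wt (s - Finsupp.single ⟨(n,k),hn,hk⟩ 1) + wt ⟨(n, k-1), hn, (by omega : k - 1 ≤ n)⟩ = a - 1 := by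
      simp only [wt] at h1 ⊢
      omega
    have en : Finsupp.weight nd (s - Finsupp.single ⟨(n,k),hn,hk⟩ 1) + nd ⟨(n, k-1), hn, (by omega : k - 1 ≤ n)⟩ = t := by
      simp only [nd] at h2 ⊢
      omega
    rw [ek, en] at hm
    exact hm

lemma Uop_mem {a t : ℕ} {p : Rinf} (hp : p ∈ W a ⊓ T t) : Uop p ∈ W (a + 1) ⊓ T t := by
  refine der_mem p fun s hs i hi => ?_
  have hwa : Finsupp.weight wt s = a := hp.1 (mem_support_iff.mp hs)
  have hwt : Finsupp.weight nd s = t := hp.2 (mem_support_iff.mp hs)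
  obtain ⟨⟨n, k⟩, hn, hk⟩ := i
  simp only at hn hk
  by_cases hkn : k = n
  · have : xv n (k + 1) = 0 := by
      rw [xv, dif_neg]
      omega
    simp only [this, smul_zero, mul_zero]
    exact Submodule.zero_mem _
  · rw [xv_eq hn (by omega : k + 1 ≤ n)]
    rw [mul_smul_comm]
    refine Submodule.smul_mem _ _ ?_
    have h1 := weight_sub_single hi wt
    have h2 := weight_sub_single hi nd
    have hm := mul_mem_W_T
      (monomial_mem_W_T (s - Finsupp.single ⟨(n,k),hn,hk⟩ 1) (1:ℚ))
      (X_mem_W_T ⟨(n, k+1), hn, by omega⟩)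
    have ek : Finsupp.weight wt (s - Finsupp.single ⟨(n,k),hn,hk⟩ 1) + wt ⟨(n, k+1), hn, (by omega : k + 1 ≤ n)⟩ = a + 1 := by
      simp only [wt] at h1 ⊢
      omega
    have en : Finsupp.weight nd (s - Finsupp.single ⟨(n,k),hn,hk⟩ 1) + nd ⟨(n, k+1), hn, (by omega : k + 1 ≤ n)⟩ = t := by
      simp only [nd] at h2 ⊢
      omega
    rw [ek, en] at hm
    exact hm

lemma Dinf_W0 {p : Rinf} (hp : p ∈ W 0) : Dinf p = 0 := by
  rw [← Submodule.mem_bot (R := ℚ)]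
  refine der_mem p fun s hs i hi => ?_
  have hwa : Finsupp.weight wt s = 0 := hp (mem_support_iff.mp hs)
  have hle : wt i ≤ Finsupp.weight wt s :=
    Finsupp.le_weight_of_ne_zero' (w := wt) (Finsupp.mem_support_iff.mp hi)
  have : i.1.2 = 0 := by
    simp only [wt] at hle
    omega
  simp only [this, if_true, reduceIte, mul_zero]
  exact Submodule.zero_mem _


/-! ### `Hop` acts on bi-homogeneous elements by the scalar `t - 2a` -/

lemma Hop_monomial (s : Idx →₀ ℕ) (q : ℚ) :
    Hop (monomial s q)
      = ((Finsupp.weight nd s : ℚ) - 2 * (Finsupp.weight wt s : ℚ)) • monomial s q := by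
  rw [Hop, mkDerivation_monomial]
  have step : (Finsupp.sum s fun i k =>
        monomial (s - Finsupp.single i 1) ((k : ℚ)) • (((i.1.1 : ℚ) - 2 * i.1.2) • X i))
      = (∑ i ∈ s.support, (s i : ℚ) * ((i.1.1 : ℚ) - 2 * i.1.2)) • monomial s (1:ℚ) := by
    rw [Finsupp.sum, Finset.sum_smul]
    refine Finset.sum_congr rfl fun i hi => ?_
    have h1 : Finsupp.single i 1 ≤ s := by
      rw [Finsupp.single_le_iff]
      exact Nat.one_le_iff_ne_zero.mpr (Finsupp.mem_support_iff.mp hi)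
    have h2 : (s - Finsupp.single i 1) + Finsupp.single i 1 = s := tsub_add_cancel_of_le h1
    rw [smul_comm, smul_eq_mul, X, monomial_mul, h2, mul_one]
    rw [show (monomial s) ((s i : ℚ)) = (s i : ℚ) • monomial s (1:ℚ) by
      rw [smul_monomial, smul_eq_mul, mul_one]]
    rw [smul_smul, mul_comm]
  rw [step, smul_comm]
  congr 1
  · -- scalar identity
    have e1 : ((Finsupp.weight nd s : ℕ) : ℚ) = ∑ i ∈ s.support, (s i : ℚ) * (i.1.1 : ℚ) := by
      rw [Finsupp.weight_apply, Finsupp.sum]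
      push_cast
      refine Finset.sum_congr rfl fun i _ => ?_
      rw [smul_eq_mul, Nat.cast_mul]
      rfl
    have e2 : ((Finsupp.weight wt s : ℕ) : ℚ) = ∑ i ∈ s.support, (s i : ℚ) * (i.1.2 : ℚ) := by
      rw [Finsupp.weight_apply, Finsupp.sum]
      push_cast
      refine Finset.sum_congr rfl fun i _ => ?_
      rw [smul_eq_mul, Nat.cast_mul]
      rfl
    rw [e1, e2, Finset.mul_sum, ← Finset.sum_sub_distrib]
    refine Finset.sum_congr rfl fun i _ => ?_
    ring
  · rw [smul_monomial, smul_eq_mul, mul_one]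

lemma Hop_eigen {a t : ℕ} {p : Rinf} (hp : p ∈ W a ⊓ T t) :
    Hop p = ((t : ℚ) - 2 * a) • p := by
  conv_lhs => rw [p.as_sum]
  rw [map_sum]
  conv_rhs => rw [p.as_sum]
  rw [Finset.smul_sum]
  refine Finset.sum_congr rfl fun s hs => ?_
  rw [Hop_monomial, hp.1 (mem_support_iff.mp hs), hp.2 (mem_support_iff.mp hs)]

/-! ### commutation relations -/

lemma comm_DU {a t : ℕ} {z : Rinf} (hz : z ∈ W a ⊓ T t) :
    Dinf (Uop z) = Uop (Dinf z) + ((t : ℚ) - 2 * a) • z := by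
  have h := congrArg (fun D : Derivation ℚ Rinf Rinf => D z) bracket_DU
  simp only [Derivation.commutator_apply] at h
  rw [Hop_eigen hz] at h
  linear_combination (norm := module) h


/-! ### powers -/

lemma UL_apply (p : Rinf) : Uop.toLinearMap p = Uop p := rfl
lemma DL_apply (p : Rinf) : Dinf.toLinearMap p = Dinf p := rfl

lemma UL_succ (j : ℕ) (x : Rinf) :
    (Uop.toLinearMap ^ (j+1)) x = Uop ((Uop.toLinearMap ^ j) x) := by
  rw [pow_succ', Module.End.mul_apply, UL_apply]

lemma DL_succ (j : ℕ) (x : Rinf) :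
    (Dinf.toLinearMap ^ (j+1)) x = Dinf ((Dinf.toLinearMap ^ j) x) := by
  rw [pow_succ', Module.End.mul_apply, DL_apply]

lemma Upow_mem {a t : ℕ} (m : ℕ) {p : Rinf} (hp : p ∈ W a ⊓ T t) :
    (Uop.toLinearMap ^ m) p ∈ W (a + m) ⊓ T t := by
  induction m with
  | zero => simpa using hp
  | succ j ih =>
      rw [UL_succ]
      exact Uop_mem ih

lemma Dpow_mem {a t : ℕ} (j : ℕ) {p : Rinf} (hp : p ∈ W a ⊓ T t) :
    (Dinf.toLinearMap ^ j) p ∈ W (a - j) ⊓ T t := by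
  induction j with
  | zero => simpa using hp
  | succ j ih =>
      rw [DL_succ, ← Nat.sub_sub]
      exact Dinf_mem ih

lemma Dpow_nil {a t : ℕ} {p : Rinf} (hp : p ∈ W a ⊓ T t) :
    (Dinf.toLinearMap ^ (a + 1)) p = 0 := by
  rw [DL_succ]
  have h0 := Dpow_mem a hp
  rw [Nat.sub_self] at h0
  exact Dinf_W0 h0.1

/-! ### the key commutation identity for powers -/

lemma L1 (m : ℕ) : ∀ (a t : ℕ) (w : Rinf), w ∈ W a ⊓ T t →
    Dinf ((Uop.toLinearMap ^ m) w)
      = (Uop.toLinearMap ^ m) (Dinf w)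
        + ((m : ℚ) * ((t : ℚ) - 2 * a - m + 1)) • (Uop.toLinearMap ^ (m - 1)) w := by
  induction m with
  | zero => intro a t w hw; simp
  | succ j ih =>
      intro a t w hw
      have hUj : (Uop.toLinearMap ^ j) w ∈ W (a + j) ⊓ T t := Upow_mem j hw
      rw [UL_succ, comm_DU hUj, ih a t w hw, map_add, Derivation.map_smul, ← UL_succ]
      rcases j with _ | i
      · push_cast
        simp only [pow_zero, Module.End.one_apply, Nat.sub_self]
        match_scalars <;> push_cast <;> ring
      · rw [Nat.add_sub_cancel, Nat.add_sub_cancel, ← UL_succ]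
        match_scalars <;> push_cast <;> ring

/-! ### the key surjectivity lemma -/

lemma key {a t : ℕ} (ht : 2 * a < t) {v : Rinf} (hv : v ∈ W a ⊓ T t) :
    v ∈ Submodule.map Dinf.toLinearMap (W (a + 1)) := by
  classical
  have htQ : (2 * a : ℚ) < t := by exact_mod_cast ht
  set c : ℕ → ℚ := fun j => ((j : ℚ) + 1) * ((t : ℚ) - 2 * a + j) with hc
  have hcpos : ∀ j, 0 < c j := by
    intro j
    apply mul_pos
    · positivity
    · have : (0:ℚ) ≤ j := by positivity
      linarith
  set b : ℕ → ℚ := fun j => (-1) ^ j / ∏ i ∈ Finset.range (j + 1), c i with hb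
  have hprodpos : ∀ j, 0 < ∏ i ∈ Finset.range (j + 1), c i :=
    fun j => Finset.prod_pos fun i _ => hcpos i
  have hb0 : b 0 * c 0 = 1 := by
    simp only [hb]
    rw [Finset.prod_range_one]
    field_simp
    rw [div_self (hcpos 0).ne']
  have hbs : ∀ j, b (j + 1) * c (j + 1) = - b j := by
    intro j
    have h1 := (hprodpos j).ne'
    have h2 := (hcpos (j + 1)).ne'
    simp only [hb]
    rw [Finset.prod_range_succ]
    field_simp
    ring
  set Tm : ℕ → Rinf := fun j => (Uop.toLinearMap ^ j) ((Dinf.toLinearMap ^ j) v) with hT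
  refine ⟨∑ j ∈ Finset.range (a + 1), b j • (Uop.toLinearMap ^ (j + 1))
      ((Dinf.toLinearMap ^ j) v), ?_, ?_⟩
  · refine Submodule.sum_mem _ fun j hj => Submodule.smul_mem _ _ ?_
    have hD : (Dinf.toLinearMap ^ j) v ∈ W (a - j) ⊓ T t := Dpow_mem j hv
    have hU := Upow_mem (j + 1) hD
    rw [Finset.mem_range] at hj
    rw [show a - j + (j + 1) = a + 1 by omega] at hU
    exact hU.1
  · rw [map_sum]
    have hDP : ∀ j ∈ Finset.range (a + 1),
        Dinf.toLinearMap (b j • (Uop.toLinearMap ^ (j + 1)) ((Dinf.toLinearMap ^ j) v))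
          = b j • Tm (j + 1) + (b j * c j) • Tm j := by
      intro j hj
      rw [Finset.mem_range] at hj
      have hD : (Dinf.toLinearMap ^ j) v ∈ W (a - j) ⊓ T t := Dpow_mem j hv
      have hl := L1 (j + 1) (a - j) t _ hD
      rw [map_smul, DL_apply, hl, Nat.add_sub_cancel, smul_add, smul_smul]
      congr 2
      · simp only [hT]
        rw [DL_succ j v]
      · rw [hc]
        rw [show ((a - j : ℕ) : ℚ) = (a : ℚ) - j from by
          rw [Nat.cast_sub (by omega : j ≤ a)]]
        push_cast
        ring
    rw [Finset.sum_congr rfl hDP, Finset.sum_add_distrib]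
    have h2 : ∑ j ∈ Finset.range (a + 1), (b j * c j) • Tm j
        = Tm 0 + ∑ j ∈ Finset.range a, (-(b j)) • Tm (j + 1) := by
      rw [Finset.sum_range_succ']
      rw [hb0, one_smul, add_comm]
      congr 1
      refine Finset.sum_congr rfl fun j _ => ?_
      rw [hbs j]
    have h1 : ∑ j ∈ Finset.range (a + 1), b j • Tm (j + 1)
        = ∑ j ∈ Finset.range a, b j • Tm (j + 1) + b a • Tm (a + 1) :=
      Finset.sum_range_succ _ _
    have hTnil : Tm (a + 1) = 0 := by
      rw [hT]
      simp only
      rw [Dpow_nil hv, map_zero]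
    have hT0 : Tm 0 = v := by
      rw [hT]
      simp
    rw [h1, h2, hTnil, hT0, smul_zero, add_zero]
    have : ∑ j ∈ Finset.range a, (-(b j)) • Tm (j + 1)
        = - ∑ j ∈ Finset.range a, b j • Tm (j + 1) := by
      rw [← Finset.sum_neg_distrib]
      exact Finset.sum_congr rfl fun j _ => by rw [neg_smul]
    rw [this]
    abel

/-! ### decomposition into `nd`-homogeneous components -/

lemma main {d : ℕ} (hd : 1 ≤ d) {z : Rinf} (hz : z ∈ W (d - 1))
    (hsupp : ∀ s ∈ z.support, 2 * (d - 1) < Finsupp.weight nd s) :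
    z ∈ Submodule.map Dinf.toLinearMap (W d) := by
  classical
  have hfin := weightedHomogeneousComponent_finsupp (w := nd) (φ := z)
  have hsum := sum_weightedHomogeneousComponent nd (φ := z)
  rw [← hsum, finsum_eq_sum _ hfin]
  refine Submodule.sum_mem _ fun t htm => ?_
  have hne : weightedHomogeneousComponent nd t z ≠ 0 := by
    simpa using (Set.Finite.mem_toFinset hfin).mp htm
  have hTt : weightedHomogeneousComponent nd t z ∈ T t :=
    weightedHomogeneousComponent_mem nd z t
  have hWt : weightedHomogeneousComponent nd t z ∈ W (d - 1) := by
    intro s hcoeff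
    rw [coeff_weightedHomogeneousComponent] at hcoeff
    by_cases h : Finsupp.weight nd s = t
    · rw [if_pos h] at hcoeff
      exact hz hcoeff
    · rw [if_neg h] at hcoeff
      exact absurd rfl hcoeff
  have ht : 2 * (d - 1) < t := by
    obtain ⟨s, hs⟩ : ∃ s, coeff s (weightedHomogeneousComponent nd t z) ≠ 0 := by
      rwa [MvPolynomial.ne_zero_iff] at hne
    rw [coeff_weightedHomogeneousComponent] at hs
    by_cases h : Finsupp.weight nd s = t
    · rw [if_pos h] at hs
      have := hsupp s (mem_support_iff.mpr hs)
      omega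
    · rw [if_neg h] at hs
      exact absurd rfl hs
  have hk := key ht ⟨hWt, hTt⟩
  rwa [show d - 1 + 1 = d by omega] at hk

/-! ### the multiplication lemma -/

lemma weight_single (w : Idx → ℕ) (i : Idx) :
    Finsupp.weight w (Finsupp.single i 1) = w i := by
  rw [Finsupp.weight_apply, Finsupp.sum_single_index] <;> simp

lemma wt_le_nd (s : Idx →₀ ℕ) : Finsupp.weight wt s ≤ Finsupp.weight nd s := by
  rw [Finsupp.weight_apply, Finsupp.weight_apply]
  refine Finset.sum_le_sum fun i _ => ?_
  have : wt i ≤ nd i := i.2.2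
  exact Nat.mul_le_mul_left _ this

lemma mul_lemma {d : ℕ} (hd : 1 ≤ d) {cp : Rinf} (hc : cp ∈ W 0)
    (hcs : ∀ s ∈ cp.support, d ≤ Finsupp.weight nd s) :
    ∀ u ∈ W (d - 1), cp * u ∈ Submodule.map Dinf.toLinearMap (W d) := by
  intro u hu
  apply main hd
  · have h := IsWeightedHomogeneous.mul (hc : IsWeightedHomogeneous wt cp 0)
      (hu : IsWeightedHomogeneous wt u (d - 1))
    rwa [zero_add] at h
  · intro s hs
    obtain ⟨s1, hs1, s2, hs2, rfl⟩ := Finset.mem_add.mp (support_mul cp u hs)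
    have h1 : d ≤ Finsupp.weight nd s1 := hcs s1 hs1
    have h2 : Finsupp.weight wt s2 = d - 1 := hu (mem_support_iff.mp hs2)
    have h3 := wt_le_nd s2
    rw [map_add]
    omega

lemma prod_X_eq {ι : Type*} [DecidableEq ι] (F : Finset ι) (g : ι → Idx) :
    (∏ i ∈ F, (X (g i) : Rinf)) = monomial (∑ i ∈ F, Finsupp.single (g i) 1) 1 := by
  induction F using Finset.induction with
  | empty => simp
  | insert a F hnotmem ih =>
      rw [Finset.prod_insert hnotmem, Finset.sum_insert hnotmem, ih, X, monomial_mul, one_mul]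

/-- If `k₁, …, k_r ≥ 1` satisfy `k₁ + ⋯ + k_r ≥ d − r`, then for every `u ∈ R_∞^{(d−1)}`
the element `x_{k₁+1,0}⋯x_{k_r+1,0}·u` lies in `D_∞(R_∞^{(d)})`; in particular for every
`k ≥ d−1`, `x_{k+1,0}·u ∈ D_∞(R_∞^{(d)})`. -/
theorem statement9 (d r : ℕ) (hd : 1 ≤ d) (hr : 1 ≤ r) (k : Fin r → ℕ)
    (hk : ∀ i, 1 ≤ k i) (hsum : d ≤ (∑ i, k i) + r) :
    (∀ u ∈ W (d - 1),
        (∏ i, xv (k i + 1) 0) * u ∈ Submodule.map Dinf.toLinearMap (W d)) ∧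
    (∀ k₀ : ℕ, d - 1 ≤ k₀ → ∀ u ∈ W (d - 1),
        xv (k₀ + 1) 0 * u ∈ Submodule.map Dinf.toLinearMap (W d)) := by
  constructor
  · -- part 1
    set g : Fin r → Idx := fun i => ⟨(k i + 1, 0), by have := hk i; omega, by omega⟩ with hg
    have hxg : ∀ i, xv (k i + 1) 0 = X (g i) := fun i => by
      rw [hg, xv_eq (by have := hk i; omega) (by omega)]
    have hprod : (∏ i, xv (k i + 1) 0)
        = monomial (∑ i, Finsupp.single (g i) 1) (1:ℚ) := by
      rw [Finset.prod_congr rfl fun i _ => hxg i, prod_X_eq]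
    have hwt0 : Finsupp.weight wt (∑ i, Finsupp.single (g i) 1) = 0 := by
      rw [map_sum]
      refine Finset.sum_eq_zero fun i _ => ?_
      rw [weight_single]
      rfl
    have hnd : Finsupp.weight nd (∑ i, Finsupp.single (g i) 1) = (∑ i, k i) + r := by
      rw [map_sum]
      have : ∀ i ∈ Finset.univ, Finsupp.weight nd (Finsupp.single (g i) 1) = k i + 1 :=
        fun i _ => by rw [weight_single]; rfl
      rw [Finset.sum_congr rfl this, Finset.sum_add_distrib]
      simp [Finset.card_univ]
    refine mul_lemma hd ?_ ?_
    · rw [hprod]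
      exact isWeightedHomogeneous_monomial _ _ _ hwt0
    · intro s hs
      rw [hprod] at hs
      rw [support_monomial, if_neg (one_ne_zero)] at hs
      rw [Finset.mem_singleton] at hs
      subst hs
      rw [hnd]
      omega
  · -- part 2
    intro k₀ hk₀ u hu
    by_cases hk1 : 1 ≤ k₀
    · have hg0p : 2 ≤ k₀ + 1 ∧ 0 ≤ k₀ + 1 := by omega
      set g0 : Idx := ⟨(k₀ + 1, 0), by omega, by omega⟩ with hg0
      have hx : xv (k₀ + 1) 0 = X g0 := by rw [hg0, xv_eq (by omega) (by omega)]
      refine mul_lemma hd ?_ ?_ u hu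
      · rw [hx]
        have := isWeightedHomogeneous_X ℚ wt g0
        rwa [show wt g0 = 0 from rfl] at this
      · intro s hs
        rw [hx, support_X, Finset.mem_singleton] at hs
        subst hs
        rw [weight_single]
        have hnd0 : nd g0 = k₀ + 1 := rfl
        omega
    · have hz : xv (k₀ + 1) 0 = 0 := by
        have hk00 : k₀ = 0 := by omega
        subst hk00
        rw [xv, dif_neg]
        push_neg
        intro h
        omega
      rw [hz, zero_mul]
      exact Submodule.zero_mem _

end
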